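/- Let 1 ≤ p ≤ q ≤ ∞ and let (E,τ) be a locally convex space carrying its weak topology (i.e. τ = σ(E,E')). Then every bounded subset A of E is a (p,q)-E-limited set: for every equicontinuous weak* p-summable sequence {χ_n} in E', the sequence (sup_{a∈A} |⟨χ_n,a⟩|)_n belongs to ℓ_q (to c_0 if q = ∞). -/

import Mathlib

open Filter Topology Set
open scoped ENNReal Pointwise

noncomputable section

variable {E : Type*} [AddCommGroup E] [Module ℝ E] [TopologicalSpace E]

/-- Membership of a real sequence in `ℓ_p`, where the case `p = ∞` is interpreted as
membership in `c₀` (i.e. the sequence tends to `0`). -/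
def SummableIn (p : ℝ≥0∞) (a : ℕ → ℝ) : Prop :=
  (p = ∞ → Tendsto a atTop (𝓝 (0 : ℝ))) ∧ (p ≠ ∞ → Memℓp a p)

/-- A sequence of continuous functionals is weak* `p`-summable if it is pointwise `ℓ_p`. -/
def WeakStarPSummable (p : ℝ≥0∞) (χ : ℕ → E →L[ℝ] ℝ) : Prop :=
  ∀ x : E, SummableIn p fun n => χ n x

/-- `‖χ‖_A = sup { |χ x| : x ∈ A ∪ {0} }`. -/
def dualNormOn (A : Set E) (χ : E →L[ℝ] ℝ) : ℝ :=
  sSup ((fun x => |χ x|) '' (A ∪ {0}))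

/-- `A` is a `(p,q)`-limited set. -/
def PQLimited (p q : ℝ≥0∞) (A : Set E) : Prop :=
  ∀ χ : ℕ → E →L[ℝ] ℝ, WeakStarPSummable p χ →
    SummableIn q fun n => dualNormOn A (χ n)

/-- A sequence in `E` is weakly `p`-summable. -/
def WeaklyPSummable (p : ℝ≥0∞) (x : ℕ → E) : Prop :=
  ∀ χ : E →L[ℝ] ℝ, SummableIn p fun n => χ (x n)

/-- A sequence is weakly null. -/
def WeaklyNull (x : ℕ → E) : Prop :=
  ∀ χ : E →L[ℝ] ℝ, Tendsto (fun n => χ (x n)) atTop (𝓝 (0 : ℝ))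

/-- A sequence is weakly `p`-Cauchy. -/
def WeaklyPCauchy (p : ℝ≥0∞) (x : ℕ → E) : Prop :=
  ∀ k j : ℕ → ℕ, StrictMono k → StrictMono j →
    WeaklyPSummable p fun n => x (k n) - x (j n)

/-- A Cauchy sequence in a topological vector space. -/
def LCSCauchySeq (x : ℕ → E) : Prop :=
  ∀ U ∈ 𝓝 (0 : E), ∃ N : ℕ, ∀ m ≥ N, ∀ n ≥ N, x m - x n ∈ U

/-- A set is sequentially precompact if every sequence in it has a Cauchy subsequence. -/
def SeqPrecompactSet (A : Set E) : Prop :=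
  ∀ u : ℕ → E, (∀ n, u n ∈ A) → ∃ φ : ℕ → ℕ, StrictMono φ ∧ LCSCauchySeq (u ∘ φ)

/-- A set is precompact (totally bounded). -/
def PrecompactSet (A : Set E) : Prop :=
  ∀ U ∈ 𝓝 (0 : E), ∃ F : Set E, F.Finite ∧ A ⊆ F + U

lemma memℓp_tendsto_zero {p : ℝ≥0∞} (hp1 : 1 ≤ p) (hp : p ≠ ∞) {a : ℕ → ℝ}
    (h : Memℓp a p) : Tendsto a atTop (𝓝 (0 : ℝ)) := by
  have hp0 : p ≠ 0 := by intro e; simp [e] at hp1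
  have hpt : 0 < p.toReal := ENNReal.toReal_pos hp0 hp
  have hs : Summable fun n => ‖a n‖ ^ p.toReal := h.summable hpt
  have h0 : Tendsto (fun n => ‖a n‖ ^ p.toReal) atTop (𝓝 0) := hs.tendsto_atTop_zero
  have hcont : ContinuousAt (fun x : ℝ => x ^ p.toReal⁻¹) 0 :=
    (Real.continuousAt_rpow_const 0 _ (Or.inr (inv_pos.2 hpt).le))
  have h1 : Tendsto (fun n => (‖a n‖ ^ p.toReal) ^ p.toReal⁻¹) atTop (𝓝 (0 ^ p.toReal⁻¹)) :=
    hcont.tendsto.comp h0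
  rw [Real.zero_rpow (inv_ne_zero hpt.ne')] at h1
  have h2 : Tendsto (fun n => ‖a n‖) atTop (𝓝 0) := by
    refine h1.congr fun n => ?_
    exact Real.rpow_rpow_inv (norm_nonneg _) hpt.ne'
  exact tendsto_zero_iff_norm_tendsto_zero.2 h2

lemma summableIn_mono {p q : ℝ≥0∞} (hp : 1 ≤ p) (hpq : p ≤ q) {a : ℕ → ℝ}
    (h : SummableIn p a) : SummableIn q a := by
  constructor
  · intro hq
    by_cases hp' : p = ∞
    · exact h.1 hp'
    · exact memℓp_tendsto_zero hp hp' (h.2 hp')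
  · intro hq
    have hp' : p ≠ ∞ := fun e => hq (top_le_iff.mp (e ▸ hpq))
    exact (h.2 hp').of_exponent_ge hpq

lemma summableIn_of_le {q : ℝ≥0∞} (hq1 : 1 ≤ q) {a b : ℕ → ℝ} (hb : SummableIn q b)
    (h0 : ∀ n, 0 ≤ a n) (hab : ∀ n, a n ≤ b n) : SummableIn q a := by
  constructor
  · intro hq
    exact squeeze_zero h0 hab (hb.1 hq)
  · intro hq
    have hq0 : q ≠ 0 := by intro e; simp [e] at hq1
    have hqt : 0 < q.toReal := ENNReal.toReal_pos hq0 hq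
    have hs : Summable fun n => ‖b n‖ ^ q.toReal := (hb.2 hq).summable hqt
    refine memℓp_gen (hs.of_nonneg_of_le (fun n => by positivity) fun n => ?_)
    refine Real.rpow_le_rpow (norm_nonneg _) ?_ hqt.le
    rw [Real.norm_eq_abs, Real.norm_eq_abs, abs_of_nonneg (h0 n)]
    exact (hab n).trans (le_abs_self _)

lemma summableIn_const_mul_abs {q : ℝ≥0∞} (hq1 : 1 ≤ q) (c : ℝ) {a : ℕ → ℝ}
    (h : SummableIn q a) : SummableIn q fun n => c * |a n| := by
  constructor
  · intro hq
    have := ((h.1 hq).abs).const_mul c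
    simpa using this
  · intro hq
    have ha := (h.2 hq).const_mul c
    have hq0 : q ≠ 0 := by intro e; simp [e] at hq1
    have hqt : 0 < q.toReal := ENNReal.toReal_pos hq0 hq
    have hs : Summable fun n => ‖c * a n‖ ^ q.toReal := ha.summable hqt
    refine memℓp_gen (hs.of_nonneg_of_le (fun n => by positivity) fun n => ?_)
    simp [Real.norm_eq_abs, abs_mul, abs_abs, le_refl]

lemma summableIn_sum {q : ℝ≥0∞} {ι : Type*} (s : Finset ι) (f : ι → ℕ → ℝ)
    (h : ∀ i ∈ s, SummableIn q (f i)) : SummableIn q fun n => ∑ i ∈ s, f i n := by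
  constructor
  · intro hq
    have : Tendsto (fun n => ∑ i ∈ s, f i n) atTop (𝓝 (∑ i ∈ s, (0:ℝ))) :=
      tendsto_finset_sum s fun i hi => (h i hi).1 hq
    simpa using this
  · intro hq
    exact Memℓp.finset_sum s fun i hi => (h i hi).2 hq

/-- If a locally convex space carries its weak topology, then every bounded set is
`(p,q)`-`E`-limited: for every equicontinuous weak* `p`-summable sequence of functionals, the
sequence of sups over `A` lies in `ℓ_q` (`c₀` if `q = ∞`). -/
theorem stmt7 {E : Type*} [AddCommGroup E] [Module ℝ E] [t : TopologicalSpace E]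
    [IsTopologicalAddGroup E] [ContinuousSMul ℝ E] [LocallyConvexSpace ℝ E]
    (hw : t = ⨅ χ : E →L[ℝ] ℝ, TopologicalSpace.induced χ inferInstance)
    (p q : ℝ≥0∞) (hp : 1 ≤ p) (hpq : p ≤ q)
    (A : Set E) (hA : Bornology.IsVonNBounded ℝ A)
    (χ : ℕ → E →L[ℝ] ℝ)
    (hequi : ∃ U ∈ 𝓝 (0 : E), ∀ n : ℕ, ∀ x ∈ U, |χ n x| ≤ 1)
    (hsum : WeakStarPSummable p χ) :
    SummableIn q fun n => dualNormOn A (χ n) := by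
  classical
  have hq1 : 1 ≤ q := hp.trans hpq
  have hnhds : (𝓝 (0 : E)) = ⨅ φ : E →L[ℝ] ℝ, Filter.comap φ (𝓝 (0 : ℝ)) := by
    rw [congrArg (fun τ : TopologicalSpace E => @nhds E τ 0) hw, _root_.nhds_iInf]
    exact iInf_congr fun φ => by rw [nhds_induced, map_zero]
  obtain ⟨U, hU, hUb⟩ := hequi
  rw [hnhds, Filter.mem_iInf] at hU
  obtain ⟨I, hIfin, V, hV, hUeq⟩ := hU
  haveI : Fintype I := hIfin.fintype
  have hVW : ∀ i : I, ∃ W ∈ 𝓝 (0:ℝ), (i : E →L[ℝ] ℝ) ⁻¹' W ⊆ V i := fun i =>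
    Filter.mem_comap.mp (hV i)
  choose W hW hWV using hVW
  -- the functionals χ n vanish where all elements of I vanish
  have key : ∀ y : E, (∀ i : I, (i : E →L[ℝ] ℝ) y = 0) → ∀ n, χ n y = 0 := by
    intro y hy n
    have hsy : ∀ s : ℝ, s • y ∈ U := by
      intro s
      rw [hUeq]
      refine mem_iInter.2 fun i => hWV i ?_
      have h0 : (i : E →L[ℝ] ℝ) (s • y) = 0 := by rw [map_smul, hy i, smul_zero]
      simp only [Set.mem_preimage, h0]
      exact mem_of_mem_nhds (hW i)
    by_contra hne
    have h2 := hUb n _ (hsy (2 * (χ n y)⁻¹))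
    rw [map_smul, smul_eq_mul, mul_assoc, inv_mul_cancel₀ hne, mul_one] at h2
    norm_num at h2
  -- linear algebra: a projection onto the range of the evaluation map
  set T : E →ₗ[ℝ] (I → ℝ) := LinearMap.pi fun i : I => ((i : E →L[ℝ] ℝ) : E →ₗ[ℝ] ℝ) with hT
  obtain ⟨R', hR'⟩ := (LinearMap.range T).exists_isCompl
  set P : (I → ℝ) →ₗ[ℝ] (I → ℝ) :=
    (LinearMap.range T).subtype ∘ₗ Submodule.linearProjOfIsCompl _ _ hR' with hPdef
  have hP1 : ∀ z ∈ LinearMap.range T, P z = z := by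
    intro z hz
    have h := Submodule.linearProjOfIsCompl_apply_left hR' ⟨z, hz⟩
    simp only [hPdef, LinearMap.comp_apply, Submodule.coe_subtype]
    rw [show z = ((⟨z, hz⟩ : LinearMap.range T) : I → ℝ) from rfl]
    exact congrArg Subtype.val h
  have hP2 : ∀ z, P z ∈ LinearMap.range T := fun z =>
    (Submodule.linearProjOfIsCompl _ _ hR' z).2
  have hex : ∀ i : I, ∃ x : E, T x = P (Pi.single i 1) := fun i =>
    LinearMap.mem_range.mp (hP2 _)
  choose u hu using hex
  have hsingle : ∀ x : E, (∑ i : I, ((i : E →L[ℝ] ℝ) x) • Pi.single i (1:ℝ)) = T x := by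
    intro x
    funext j
    simp [Finset.sum_apply, Pi.single_apply, hT, LinearMap.pi_apply, mul_ite,
      Finset.sum_ite_eq]
  have hrep : ∀ n x, χ n x = ∑ i : I, ((i : E →L[ℝ] ℝ) x) * χ n (u i) := by
    intro n x
    have hTy : T (x - ∑ i : I, ((i : E →L[ℝ] ℝ) x) • u i) = 0 := by
      rw [map_sub, map_sum]
      simp_rw [map_smul, hu]
      have heq : (∑ i : I, ((i : E →L[ℝ] ℝ) x) • P (Pi.single i 1)) = P (T x) := by
        rw [← hsingle x, map_sum]
        simp_rw [map_smul]
      rw [heq, hP1 (T x) (LinearMap.mem_range_self T x), sub_self]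
    have hzero : ∀ i : I,
        (i : E →L[ℝ] ℝ) (x - ∑ i : I, ((i : E →L[ℝ] ℝ) x) • u i) = 0 := by
      intro i
      have h := congrFun (congrArg (fun (f : I → ℝ) => f) hTy) i
      simpa [hT, LinearMap.pi_apply] using h
    have h0 := key _ hzero n
    rw [map_sub, map_sum] at h0
    simp_rw [map_smul, smul_eq_mul] at h0
    linarith [h0]
  -- boundedness of the finitely many functionals on A
  have hMex : ∀ i : I, ∃ C : ℝ, 0 ≤ C ∧ ∀ x ∈ A ∪ ({0} : Set E),
      |(i : E →L[ℝ] ℝ) x| ≤ C := by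
    intro i
    have himg : Bornology.IsVonNBounded ℝ ((i : E →L[ℝ] ℝ) '' A) :=
      hA.image (i : E →L[ℝ] ℝ)
    have hbd : Bornology.IsBounded ((i : E →L[ℝ] ℝ) '' A) :=
      (NormedSpace.isVonNBounded_iff ℝ).mp himg
    obtain ⟨Ci, hCi⟩ := isBounded_iff_forall_norm_le.mp hbd
    refine ⟨max Ci 0, le_max_right _ _, ?_⟩
    rintro x (hx | hx)
    · have h := hCi ((i : E →L[ℝ] ℝ) x) (mem_image_of_mem _ hx)
      rw [Real.norm_eq_abs] at h
      exact h.trans (le_max_left _ _)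
    · rw [mem_singleton_iff] at hx
      simp [hx]
  choose C hC0 hCb using hMex
  set b : ℕ → ℝ := fun n => ∑ i : I, C i * |χ n (u i)| with hbdef
  have hbsum : SummableIn q b :=
    summableIn_sum Finset.univ _ fun i _ =>
      summableIn_const_mul_abs hq1 (C i) (summableIn_mono hp hpq (hsum (u i)))
  have hub : ∀ n, ∀ z ∈ (fun x => |χ n x|) '' (A ∪ {0}), z ≤ b n := by
    rintro n z ⟨x, hx, rfl⟩
    show |(χ n) x| ≤ b n
    have hle : |(χ n) x| ≤ ∑ i : I, C i * |χ n (u i)| := by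
      rw [hrep n x]
      refine (Finset.abs_sum_le_sum_abs _ _).trans ?_
      refine Finset.sum_le_sum fun i _ => ?_
      rw [abs_mul]
      exact mul_le_mul_of_nonneg_right (hCb i x hx) (abs_nonneg _)
    exact hle
  have hmem0 : ∀ n, (0:ℝ) ∈ (fun x => |χ n x|) '' (A ∪ {0}) := fun n =>
    ⟨0, Or.inr rfl, by simp⟩
  have hd0 : ∀ n, 0 ≤ dualNormOn A (χ n) := fun n =>
    le_csSup ⟨b n, fun z hz => hub n z hz⟩ (hmem0 n)
  have hdb : ∀ n, dualNormOn A (χ n) ≤ b n := fun n =>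
    csSup_le ⟨0, hmem0 n⟩ (hub n)
  exact summableIn_of_le hq1 hbsum hd0 hdb
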